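/- Let G ⊂ ℝⁿ be a convex body and let K, L be nonempty compact convex subsets of G with K ≠ L, and set d := d_H(K,L). Then there exist a unit vector u ∈ 𝕊ⁿ⁻¹ and a point q such that either (i) q ∈ L and the interior of C_G(u, d) + q is contained in (G + K ∪̃ L) \ (G + K), or (ii) q ∈ K and the interior of C_G(u, d) + q is contained in (G + K ∪̃ L) \ (G + L). -/

import Mathlib

open MeasureTheory Metric Pointwise
open scoped RealInnerProductSpace

/-- Support function `h_G(u) = sup_{x ∈ G} ⟪u, x⟫`. -/
noncomputable def suppFn {n : ℕ} (G : Set (EuclideanSpace ℝ (Fin n)))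
    (u : EuclideanSpace ℝ (Fin n)) : ℝ :=
  sSup ((fun x => ⟪u, x⟫) '' G)

/-- The cap of `G` in direction `u` with height `h`:
`C_G(u,h) = {x ∈ G : ⟪u, x⟫ ≥ h_G(u) − h}`. -/
noncomputable def capG {n : ℕ} (G : Set (EuclideanSpace ℝ (Fin n)))
    (u : EuclideanSpace ℝ (Fin n)) (h : ℝ) : Set (EuclideanSpace ℝ (Fin n)) :=
  {x ∈ G | suppFn G u - h ≤ ⟪u, x⟫}

lemma aux9 {n : ℕ} {G K L : Set (EuclideanSpace ℝ (Fin n))}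
    (hGcp : IsCompact G) (hKcp : IsCompact K) (hKne : K.Nonempty) (hKcv : Convex ℝ K)
    {p : EuclideanSpace ℝ (Fin n)} (hp : p ∈ closure (convexHull ℝ (K ∪ L)))
    {d : ℝ} (hdpos : 0 < d) (hd : Metric.infDist p K = d) :
    ∃ u : EuclideanSpace ℝ (Fin n), ‖u‖ = 1 ∧
      interior (capG G u d) + ({p} : Set _) ⊆
        (G + closure (convexHull ℝ (K ∪ L))) \ (G + K) := by
  obtain ⟨q, hqK, hq⟩ := hKcp.exists_infDist_eq_dist hKne p
  have hpq : dist p q = d := by rw [← hq, hd]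
  have hnorm : ‖p - q‖ = d := by rwa [← dist_eq_norm]
  set u : EuclideanSpace ℝ (Fin n) := d⁻¹ • (p - q) with hu
  have hunorm : ‖u‖ = 1 := by
    rw [hu, norm_smul, hnorm, Real.norm_eq_abs, abs_inv, abs_of_pos hdpos,
      inv_mul_cancel₀ hdpos.ne']
  -- obtuse angle property
  have hiInf : ‖p - q‖ = ⨅ w : K, ‖p - w‖ := by
    have h1 : Metric.infDist p K = ⨅ y : K, dist p y := Metric.infDist_eq_iInf
    simp only [← dist_eq_norm]
    rw [← hq]
    exact h1
  have hobtuse : ∀ k ∈ K, ⟪p - q, k - q⟫ ≤ 0 :=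
    (norm_eq_iInf_iff_real_inner_le_zero hKcv hqK).mp hiInf
  refine ⟨u, hunorm, ?_⟩
  rintro y hy
  rw [Set.add_singleton] at hy
  obtain ⟨z, hz, rfl⟩ := hy
  have hzcap : z ∈ capG G u d := interior_subset hz
  constructor
  · exact Set.add_mem_add hzcap.1 hp
  · -- show z + p ∉ G + K
    intro hcon
    obtain ⟨g, hg, k, hk, hgk⟩ := Set.mem_add.mp hcon
    -- strict inequality from interior membership
    obtain ⟨ε, hε, hball⟩ := Metric.mem_nhds_iff.mp (mem_interior_iff_mem_nhds.mp hz)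
    have hz' : z - (ε / 2) • u ∈ capG G u d := by
      apply hball
      rw [Metric.mem_ball, dist_eq_norm]
      have : z - (ε / 2) • u - z = -((ε / 2) • u) := by abel
      rw [this, norm_neg, norm_smul, hunorm, mul_one, Real.norm_eq_abs,
        abs_of_pos (by linarith)]
      linarith
    have huu : ⟪u, u⟫ = 1 := by
      rw [real_inner_self_eq_norm_sq, hunorm, one_pow]
    have hstrict : suppFn G u - d + ε / 2 ≤ ⟪u, z⟫ := by
      have := hz'.2
      rw [inner_sub_right, real_inner_smul_right, huu] at this
      linarith
    -- upper bound for ⟪u, g⟫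
    have hcont : Continuous fun x : EuclideanSpace ℝ (Fin n) => ⟪u, x⟫ :=
      continuous_const.inner continuous_id
    have hgle : ⟪u, g⟫ ≤ suppFn G u :=
      le_csSup (hGcp.image hcont).bddAbove ⟨g, hg, rfl⟩
    -- ⟪u, p - k⟫ ≥ d
    have hpk : d ≤ ⟪u, p - k⟫ := by
      have h1 : ⟪u, p - k⟫ = d⁻¹ * ⟪p - q, p - k⟫ := real_inner_smul_left _ _ _
      have h2 : ⟪p - q, p - k⟫ = ⟪p - q, p - q⟫ + ⟪p - q, q - k⟫ := by
        rw [← inner_add_right]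
        congr 1
        abel
      have h3 : ⟪p - q, q - k⟫ = -⟪p - q, k - q⟫ := by
        rw [← inner_neg_right]
        congr 1
        abel
      have h4 : ⟪p - q, k - q⟫ ≤ 0 := hobtuse k hk
      have h5 : ⟪p - q, p - q⟫ = d ^ 2 := by
        rw [real_inner_self_eq_norm_sq, hnorm]
      rw [h1, h2, h3, h5]
      have hdd : d⁻¹ * d ^ 2 = d := by field_simp
      nlinarith [inv_pos.mpr hdpos, h4, hdd]
    have heq : ⟪u, z⟫ + ⟪u, p⟫ = ⟪u, g⟫ + ⟪u, k⟫ := by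
      rw [← inner_add_right, ← inner_add_right, hgk]
    have hupk : ⟪u, p - k⟫ = ⟪u, p⟫ - ⟪u, k⟫ := inner_sub_right _ _ _
    linarith
  
theorem stmt9 {n : ℕ} (G : Set (EuclideanSpace ℝ (Fin n)))
    (hGcv : Convex ℝ G) (hGcp : IsCompact G) (hGint : (interior G).Nonempty)
    (K L : Set (EuclideanSpace ℝ (Fin n)))
    (hKne : K.Nonempty) (hKcp : IsCompact K) (hKcv : Convex ℝ K) (hKG : K ⊆ G)
    (hLne : L.Nonempty) (hLcp : IsCompact L) (hLcv : Convex ℝ L) (hLG : L ⊆ G)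
    (hKL : K ≠ L) :
    ∃ u : EuclideanSpace ℝ (Fin n), ‖u‖ = 1 ∧
      ∃ q : EuclideanSpace ℝ (Fin n),
        ((q ∈ L ∧ interior (capG G u (hausdorffDist K L)) + ({q} : Set _) ⊆
            (G + closure (convexHull ℝ (K ∪ L))) \ (G + K)) ∨
          (q ∈ K ∧ interior (capG G u (hausdorffDist K L)) + ({q} : Set _) ⊆
            (G + closure (convexHull ℝ (K ∪ L))) \ (G + L))) := by
  set d := hausdorffDist K L with hdd
  have hfin : EMetric.hausdorffEdist K L ≠ ⊤ :=
    hausdorffEdist_ne_top_of_nonempty_of_bounded hKne hLne hKcp.isBounded hLcp.isBounded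
  have hdpos : 0 < d := by
    rcases lt_or_eq_of_le (hausdorffDist_nonneg (s := K) (t := L)) with h | h
    · exact h
    · exact absurd ((hKcp.isClosed.hausdorffDist_zero_iff_eq hLcp.isClosed hfin).mp h.symm) hKL
  -- attainment of the Hausdorff distance
  obtain ⟨p₁, hp₁K, hp₁max⟩ := hKcp.exists_isMaxOn hKne
    (continuous_infDist_pt L).continuousOn
  obtain ⟨p₂, hp₂L, hp₂max⟩ := hLcp.exists_isMaxOn hLne
    (continuous_infDist_pt K).continuousOn
  have hle : d ≤ max (Metric.infDist p₁ L) (Metric.infDist p₂ K) := by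
    apply hausdorffDist_le_of_infDist (le_max_iff.mpr (Or.inl Metric.infDist_nonneg))
    · exact fun x hx => le_max_iff.mpr (Or.inl (hp₁max hx))
    · exact fun x hx => le_max_iff.mpr (Or.inr (hp₂max hx))
  rcases max_cases (Metric.infDist p₁ L) (Metric.infDist p₂ K) with ⟨hmax, _⟩ | ⟨hmax, _⟩
  · -- max attained on K side: p₁ ∈ K with infDist p₁ L = d
    rw [hmax] at hle
    have heq : Metric.infDist p₁ L = d :=
      le_antisymm (infDist_le_hausdorffDist_of_mem hp₁K hfin) hle
    have hp₁hull : p₁ ∈ closure (convexHull ℝ (L ∪ K)) :=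
      subset_closure (subset_convexHull ℝ _ (Or.inr hp₁K))
    obtain ⟨u, hu, hsub⟩ := aux9 (L := K) hGcp hLcp hLne hLcv hp₁hull hdpos heq
    refine ⟨u, hu, p₁, Or.inr ⟨hp₁K, ?_⟩⟩
    rwa [Set.union_comm] at hsub
  · rw [hmax] at hle
    have heq : Metric.infDist p₂ K = d := by
      refine le_antisymm ?_ hle
      have h2 := infDist_le_hausdorffDist_of_mem hp₂L
        (by show hausdorffEDist L K ≠ ⊤; rwa [hausdorffEDist_comm] : EMetric.hausdorffEdist L K ≠ ⊤)
      rwa [hausdorffDist_comm] at h2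
    have hp₂hull : p₂ ∈ closure (convexHull ℝ (K ∪ L)) :=
      subset_closure (subset_convexHull ℝ _ (Or.inr hp₂L))
    obtain ⟨u, hu, hsub⟩ := aux9 (L := L) hGcp hKcp hKne hKcv hp₂hull hdpos heq
    exact ⟨u, hu, p₂, Or.inl ⟨hp₂L, hsub⟩⟩
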